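/- arXiv:1007.4823 — 2 statements merged into one kernel-verified Lean document; each statement's English description precedes it below -/
import Mathlib

section
/- Let Γ be a discrete subgroup of SL(2,ℝ), ξ ∈ ℤ, m ≥ 0, and F(z,X) = Σ_{r=0}^m f_r(z) X^r ∈ 𝓕_m[X]. Then F is a quasimodular polynomial belonging to QP^m_ξ(Γ) if and only if for every r ∈ {0,1,…,m} the coefficient f_r satisfies (f_r |_{ξ−2r} γ)(z) = Σ_{ℓ=r}^m C(ℓ,r) f_ℓ(z) 𝔎(γ,z)^{ℓ−r} for all z ∈ ℍ and γ ∈ Γ (C(ℓ,r) being a binomial coefficient). In particular, if F ∈ QP^m_ξ(Γ) then each f_r is a quasimodular form belonging to QM^{m−r}_{ξ−2r}(Γ). -/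
noncomputable section

open Complex Polynomial

/-- The upper half plane `ℍ`, as a subset of `ℂ`. -/
def UHP : Set ℂ := {z : ℂ | 0 < z.im}

/-- `SL(2, ℝ)`. -/
abbrev SL2R := Matrix.SpecialLinearGroup (Fin 2) ℝ

/-- `GL⁺(2, ℝ)`, the group of real 2×2 matrices of positive determinant. -/
abbrev GL2P := Matrix.GLPos (Fin 2) ℝ

/-- Topology on `SL(2,ℝ)` induced from the space of matrices (used to speak of
discrete subgroups of `SL(2,ℝ)`). -/
instance : TopologicalSpace SL2R :=
  TopologicalSpace.induced (fun g : SL2R => (g : Matrix (Fin 2) (Fin 2) ℝ)) inferInstance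

/-- A function belongs to `𝓕` if it is holomorphic on the upper half plane. -/
def Hol (f : ℂ → ℂ) : Prop := DifferentiableOn ℂ f UHP

/-- `𝔍(γ, z) = cz + d` for `γ ∈ SL(2, ℝ)`. -/
def jJ (γ : SL2R) (z : ℂ) : ℂ := (γ 1 0 : ℝ) * z + (γ 1 1 : ℝ)

/-- `𝔎(γ, z) = c/(cz + d)` for `γ ∈ SL(2, ℝ)`. -/
def kK (γ : SL2R) (z : ℂ) : ℂ := (γ 1 0 : ℝ) / jJ γ z

/-- `γ z = (az+b)/(cz+d)` for `γ ∈ SL(2, ℝ)`. -/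
def mact (γ : SL2R) (z : ℂ) : ℂ := ((γ 0 0 : ℝ) * z + (γ 0 1 : ℝ)) / jJ γ z

/-- The underlying real matrix of an element of `GL⁺(2, ℝ)`. -/
def gmat (α : GL2P) : Matrix (Fin 2) (Fin 2) ℝ :=
  ((α : Matrix.GeneralLinearGroup (Fin 2) ℝ) : Matrix (Fin 2) (Fin 2) ℝ)

/-- The determinant of an element of `GL⁺(2, ℝ)`. -/
def gdet (α : GL2P) : ℝ := (gmat α).det

/-- `𝔍(α, z) = cz + d` for `α ∈ GL⁺(2, ℝ)`. -/
def gJ (α : GL2P) (z : ℂ) : ℂ := (gmat α 1 0 : ℝ) * z + (gmat α 1 1 : ℝ)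

/-- `𝔎(α, z) = c/(cz + d)` for `α ∈ GL⁺(2, ℝ)`. -/
def gK (α : GL2P) (z : ℂ) : ℂ := (gmat α 1 0 : ℝ) / gJ α z

/-- `α z = (az+b)/(cz+d)` for `α ∈ GL⁺(2, ℝ)`. -/
def gact (α : GL2P) (z : ℂ) : ℂ := ((gmat α 0 0 : ℝ) * z + (gmat α 0 1 : ℝ)) / gJ α z

/-- `(det α)^(μ/2)` for `α ∈ GL⁺(2, ℝ)` and `μ ∈ ℤ`. -/
def detpow (α : GL2P) (μ : ℤ) : ℂ := ((gdet α ^ ((μ : ℝ) / 2) : ℝ) : ℂ)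

/-- The weight-`ξ` action `F ∥_ξ γ` of `SL(2,ℝ)` on polynomials over `𝓕`:
`(F ∥_ξ γ)(z, X) = 𝔍(γ,z)^(-ξ) F(γz, 𝔍(γ,z)^2 (X - 𝔎(γ,z)))`. -/
def polyAct (ξ : ℤ) (F : ℂ → Polynomial ℂ) (γ : SL2R) : ℂ → Polynomial ℂ := fun z =>
  Polynomial.C (jJ γ z ^ (-ξ)) *
    (F (mact γ z)).comp (Polynomial.C (jJ γ z ^ 2) * (Polynomial.X - Polynomial.C (kK γ z)))

/-- The weight-`ξ` action `F ∥_ξ α` of `GL⁺(2,ℝ)` on polynomials over `𝓕`: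
`(F ∥_ξ α)(z, X) = (det α)^(ξ/2) 𝔍(α,z)^(-ξ) F(αz, (det α)⁻¹ 𝔍(α,z)^2 (X - 𝔎(α,z)))`. -/
def polyActG (ξ : ℤ) (F : ℂ → Polynomial ℂ) (α : GL2P) : ℂ → Polynomial ℂ := fun z =>
  Polynomial.C (detpow α ξ * gJ α z ^ (-ξ)) *
    (F (gact α z)).comp
      (Polynomial.C ((gdet α : ℂ)⁻¹ * gJ α z ^ 2) * (Polynomial.X - Polynomial.C (gK α z)))

/-- The weight-`l` action `Φ |^J_l γ` of `SL(2,ℝ)` on formal power series over `𝓕`: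
`(Φ |^J_l γ)(z, X) = 𝔍(γ,z)^(-l) e^(-𝔎(γ,z) X) Φ(γz, 𝔍(γ,z)^(-2) X)`. -/
def psAct (l : ℤ) (Φ : ℂ → PowerSeries ℂ) (γ : SL2R) : ℂ → PowerSeries ℂ := fun z =>
  PowerSeries.C (R := ℂ) (jJ γ z ^ (-l)) *
    (PowerSeries.mk fun n => (-(kK γ z)) ^ n / (n.factorial : ℂ)) *
    PowerSeries.rescale (jJ γ z ^ (-2 : ℤ)) (Φ (mact γ z))

/-- The weight-`l` action `Φ |^J_l α` of `GL⁺(2,ℝ)` on formal power series over `𝓕`: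
`(Φ |^J_l α)(z, X) = (det α)^(l/2) 𝔍(α,z)^(-l) e^(-𝔎(α,z) X) Φ(αz, (det α) 𝔍(α,z)^(-2) X)`. -/
def psActG (l : ℤ) (Φ : ℂ → PowerSeries ℂ) (α : GL2P) : ℂ → PowerSeries ℂ := fun z =>
  PowerSeries.C (R := ℂ) (detpow α l * gJ α z ^ (-l)) *
    (PowerSeries.mk fun n => (-(gK α z)) ^ n / (n.factorial : ℂ)) *
    PowerSeries.rescale ((gdet α : ℂ) * gJ α z ^ (-2 : ℤ)) (Φ (gact α z))

/-- The map `Π^δ_m`: for `Φ(z,X) = Σ_k φ_k(z) X^(k+δ)`,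
`(Π^δ_m Φ)(z, X) = Σ_{r=0}^m (1/r!) φ_(m-r)(z) X^r`. -/
def PiDM (δ m : ℕ) (Φ : ℂ → PowerSeries ℂ) : ℂ → Polynomial ℂ := fun z =>
  ∑ r ∈ Finset.range (m + 1),
    Polynomial.C ((PowerSeries.coeff (R := ℂ) (m - r + δ) (Φ z)) / (r.factorial : ℂ)) *
      Polynomial.X ^ r

/-- Membership in `𝓕_m[X]`: degree at most `m` and holomorphic coefficients. -/
def InFmX (m : ℕ) (F : ℂ → Polynomial ℂ) : Prop :=
  (∀ z : ℂ, (F z).degree ≤ (m : WithBot ℕ)) ∧ ∀ r : ℕ, Hol fun z => (F z).coeff r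

/-- Membership in `𝓕[[X]]_δ = X^δ 𝓕[[X]]` with holomorphic coefficients. -/
def InFXd (δ : ℕ) (Φ : ℂ → PowerSeries ℂ) : Prop :=
  (∀ z : ℂ, ∀ k < δ, PowerSeries.coeff (R := ℂ) k (Φ z) = 0) ∧
    ∀ k : ℕ, Hol fun z => PowerSeries.coeff (R := ℂ) k (Φ z)

/-- `QP^m_ξ(Γ)`: quasimodular polynomials of weight `ξ` and degree at most `m` for `Γ`. -/
def IsQP (Γ : Subgroup SL2R) (ξ : ℤ) (m : ℕ) (F : ℂ → Polynomial ℂ) : Prop :=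
  InFmX m F ∧ ∀ γ ∈ Γ, ∀ z ∈ UHP, polyAct ξ F γ z = F z

/-- `J_l(Γ)_δ`: Jacobi-like forms of weight `l` for `Γ` lying in `𝓕[[X]]_δ`. -/
def IsJF (Γ : Subgroup SL2R) (l : ℤ) (δ : ℕ) (Φ : ℂ → PowerSeries ℂ) : Prop :=
  InFXd δ Φ ∧ ∀ γ ∈ Γ, ∀ z ∈ UHP, psAct l Φ γ z = Φ z

/-- `M_μ(Γ)`: modular forms of weight `μ` for `Γ` (cusp conditions suppressed). -/
def IsModular (Γ : Subgroup SL2R) (μ : ℤ) (f : ℂ → ℂ) : Prop :=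
  Hol f ∧ ∀ γ ∈ Γ, ∀ z ∈ UHP, jJ γ z ^ (-μ) * f (mact γ z) = f z

/-- `QM^m_ξ(Γ)`: quasimodular forms of weight `ξ` and depth at most `m` for `Γ`. -/
def IsQM (Γ : Subgroup SL2R) (ξ : ℤ) (m : ℕ) (f : ℂ → ℂ) : Prop :=
  Hol f ∧ ∃ g : ℕ → ℂ → ℂ, (∀ r, Hol (g r)) ∧
    ∀ γ ∈ Γ, ∀ z ∈ UHP,
      jJ γ z ^ (-ξ) * f (mact γ z) = ∑ r ∈ Finset.range (m + 1), g r z * kK γ z ^ r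

/-- The factorial `t!` of an integer `t` (equal to `(t.toNat)!`; intended for `t ≥ 0`). -/
def zfact (t : ℤ) : ℂ := (t.toNat.factorial : ℂ)

lemma jJ_ne_zero (γ : SL2R) {z : ℂ} (hz : z ∈ UHP) : jJ γ z ≠ 0 := by
  intro h
  have him := congrArg Complex.im h
  simp [jJ, Complex.add_im, Complex.mul_im] at him
  have hz' : z.im ≠ 0 := ne_of_gt hz
  have hc : (γ 1 0 : ℝ) = 0 := by
    rcases him with h' | h'
    · exact h'
    · exact absurd h' hz'
  have hre := congrArg Complex.re h
  simp [jJ, hc] at hre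
  have hdet := Matrix.SpecialLinearGroup.det_coe γ
  rw [Matrix.det_fin_two] at hdet
  rw [hc, hre] at hdet
  simp at hdet

lemma comp_coeff_aux (G q : Polynomial ℂ) (n : ℕ) (hn : G.natDegree < n) (r : ℕ) :
    (G.comp q).coeff r = ∑ i ∈ Finset.range n, G.coeff i * (q ^ i).coeff r := by
  conv_lhs => rw [G.as_sum_range' n hn]
  rw [Polynomial.comp, Polynomial.eval₂_finset_sum, Polynomial.finset_sum_coeff]
  refine Finset.sum_congr rfl fun i _ => ?_
  rw [Polynomial.eval₂_monomial, Polynomial.coeff_C_mul]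

lemma key (ξ : ℤ) (m : ℕ) (F : ℂ → Polynomial ℂ) (hd : ∀ z, (F z).natDegree ≤ m)
    (γ : SL2R) (z : ℂ) (hJ : jJ γ z ≠ 0) :
    (polyAct ξ F γ z = F z) ↔ ∀ r ≤ m,
      jJ γ z ^ (-(ξ - 2 * (r : ℤ))) * (F (mact γ z)).coeff r =
        ∑ ℓ ∈ Finset.Icc r m, (ℓ.choose r : ℂ) * (F z).coeff ℓ * kK γ z ^ (ℓ - r) := by
  set J := jJ γ z with hJdef
  set K := kK γ z with hKdef
  set w := mact γ z with hwdef
  -- composition identities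
  have hcomp1 : (C (J ^ 2) * (X - C K)).comp (X + C K) = C (J ^ 2) * X := by
    simp [Polynomial.mul_comp, Polynomial.sub_comp, Polynomial.add_comp]
  have hcomp2 : (C (J ^ 2) * X).comp (X - C K) = C (J ^ 2) * (X - C K) := by
    simp [Polynomial.mul_comp]
  have hcomp3 : (X + C K).comp (X - C K) = X := by
    simp [Polynomial.add_comp, Polynomial.sub_comp]
  have step1 : polyAct ξ F γ z = F z ↔
      C (J ^ (-ξ)) * (F w).comp (C (J ^ 2) * X) = (F z).comp (X + C K) := by
    unfold polyAct
    rw [← hJdef, ← hKdef, ← hwdef]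
    constructor
    · intro h
      calc C (J ^ (-ξ)) * (F w).comp (C (J ^ 2) * X)
          = (C (J ^ (-ξ)) * (F w).comp (C (J ^ 2) * (X - C K))).comp (X + C K) := by
            rw [Polynomial.mul_comp, Polynomial.C_comp, Polynomial.comp_assoc, hcomp1]
        _ = (F z).comp (X + C K) := by rw [h]
    · intro h
      have h2 := congrArg (fun q => q.comp (X - C K)) h
      rw [Polynomial.mul_comp, Polynomial.C_comp, Polynomial.comp_assoc, hcomp2,
        Polynomial.comp_assoc, hcomp3, Polynomial.comp_X] at h2
      exact h2
  -- coefficient of the left side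
  have hL : ∀ r : ℕ, (C (J ^ (-ξ)) * (F w).comp (C (J ^ 2) * X)).coeff r
      = J ^ (-(ξ - 2 * (r : ℤ))) * (F w).coeff r := by
    intro r
    rw [Polynomial.coeff_C_mul,
      comp_coeff_aux (F w) _ (m + 1) (Nat.lt_succ_of_le (hd w)) r]
    have hterm : ∀ i : ℕ, ((C (J ^ 2) * X) ^ i).coeff r
        = (J ^ 2) ^ i * (if r = i then (1 : ℂ) else 0) := by
      intro i
      rw [mul_pow, ← map_pow, Polynomial.coeff_C_mul, Polynomial.coeff_X_pow]
    simp only [hterm, mul_ite, mul_one, mul_zero]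
    rw [Finset.sum_ite_eq]
    by_cases hr : r ∈ Finset.range (m + 1)
    · rw [if_pos hr]
      have hz1 : J ^ (-ξ) * (J ^ 2) ^ r = J ^ (-(ξ - 2 * (r : ℤ))) := by
        rw [← pow_mul, ← zpow_natCast J (2 * r), ← zpow_add₀ hJ]
        congr 1
        push_cast
        ring
      rw [← hz1]
      ring
    · rw [if_neg hr]
      have : (F w).coeff r = 0 := by
        apply Polynomial.coeff_eq_zero_of_natDegree_lt
        have := hd w
        simp [Finset.mem_range] at hr
        omega
      rw [this, mul_zero, mul_zero]
  -- coefficient of the right side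
  have hR : ∀ r : ℕ, ((F z).comp (X + C K)).coeff r
      = ∑ i ∈ Finset.range (m + 1), (i.choose r : ℂ) * (F z).coeff i * K ^ (i - r) := by
    intro r
    rw [comp_coeff_aux (F z) _ (m + 1) (Nat.lt_succ_of_le (hd z)) r]
    refine Finset.sum_congr rfl fun i _ => ?_
    rw [Polynomial.coeff_X_add_C_pow]
    ring
  have hIcc : ∀ r : ℕ, ∑ i ∈ Finset.range (m + 1), (i.choose r : ℂ) * (F z).coeff i * K ^ (i - r)
      = ∑ ℓ ∈ Finset.Icc r m, (ℓ.choose r : ℂ) * (F z).coeff ℓ * K ^ (ℓ - r) := by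
    intro r
    symm
    apply Finset.sum_subset
    · intro ℓ hℓ
      simp only [Finset.mem_Icc] at hℓ
      simp only [Finset.mem_range]
      omega
    · intro ℓ hℓ hℓ'
      simp only [Finset.mem_range] at hℓ
      simp only [Finset.mem_Icc, not_and, not_le] at hℓ'
      have : ℓ < r := by omega
      rw [Nat.choose_eq_zero_of_lt this]
      simp
  rw [step1]
  constructor
  · intro h r _
    have := congrArg (fun q => q.coeff r) h
    rw [hL, hR, hIcc] at this
    exact this
  · intro h
    ext r
    rw [hL, hR]
    by_cases hr : r ≤ m
    · rw [hIcc]; exact h r hr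
    · have h1 : (F w).coeff r = 0 := by
        apply Polynomial.coeff_eq_zero_of_natDegree_lt
        have := hd w; omega
      rw [h1, mul_zero]
      symm
      apply Finset.sum_eq_zero
      intro i hi
      simp only [Finset.mem_range] at hi
      rw [Nat.choose_eq_zero_of_lt (by omega)]
      simp

-- STATEMENT 5
theorem stmt5 (Γ : Subgroup SL2R) (hΓ : DiscreteTopology Γ) (ξ : ℤ) (m : ℕ)
    (F : ℂ → Polynomial ℂ) (hF : InFmX m F) :
    ((∀ γ ∈ Γ, ∀ z ∈ UHP, polyAct ξ F γ z = F z) ↔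
      ∀ r ≤ m, ∀ γ ∈ Γ, ∀ z ∈ UHP,
        jJ γ z ^ (-(ξ - 2 * (r : ℤ))) * (F (mact γ z)).coeff r =
          ∑ ℓ ∈ Finset.Icc r m, (ℓ.choose r : ℂ) * (F z).coeff ℓ * kK γ z ^ (ℓ - r)) ∧
    ((∀ γ ∈ Γ, ∀ z ∈ UHP, polyAct ξ F γ z = F z) →
      ∀ r ≤ m, IsQM Γ (ξ - 2 * (r : ℤ)) (m - r) fun z => (F z).coeff r) := by
  have hd : ∀ z, (F z).natDegree ≤ m := fun z =>
    Polynomial.natDegree_le_iff_degree_le.mpr (hF.1 z)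
  constructor
  · constructor
    · intro h r hr γ hγ z hz
      exact (key ξ m F hd γ z (jJ_ne_zero γ hz)).mp (h γ hγ z hz) r hr
    · intro h γ hγ z hz
      exact (key ξ m F hd γ z (jJ_ne_zero γ hz)).mpr fun r hr => h r hr γ hγ z hz
  · intro h r hr
    refine ⟨hF.2 r, fun j z => ((r + j).choose r : ℂ) * (F z).coeff (r + j),
      fun j => (hF.2 (r + j)).const_mul _, ?_⟩
    intro γ hγ z hz
    have h1 := (key ξ m F hd γ z (jJ_ne_zero γ hz)).mp (h γ hγ z hz) r hr
    simp only
    rw [h1]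
    refine Finset.sum_bij' (fun ℓ _ => ℓ - r) (fun j _ => r + j) ?_ ?_ ?_ ?_ ?_
    · intro a ha
      simp only [Finset.mem_Icc] at ha
      simp only [Finset.mem_range]
      omega
    · intro a ha
      simp only [Finset.mem_range] at ha
      simp only [Finset.mem_Icc]
      omega
    · intro a ha
      simp only [Finset.mem_Icc] at ha
      omega
    · intro a _
      omega
    · intro a ha
      simp only [Finset.mem_Icc] at ha
      have hra : r + (a - r) = a := by omega
      rw [hra]
end
end

section
/- Let ξ ∈ ℤ, m ≥ 0, α ∈ GL⁺(2,ℝ), and F(z,X) ∈ 𝓕_m[X]. Then the leading coefficient satisfies 𝔖_m(F ‖_ξ α) = (𝔖_m F) |_{ξ−2m} α. Consequently, if Γ is a discrete subgroup of SL(2,ℝ) and ΓαΓ = Γα_1 ⊔ … ⊔ Γα_s is a disjoint right-coset decomposition, then 𝔖_m(Σ_{i=1}^s F ‖_ξ α_i) = Σ_{i=1}^s (𝔖_m F) |_{ξ−2m} α_i, i.e. 𝔖_m intertwines the Hecke operator T^P_ξ(α) on quasimodular polynomials with the Hecke operator T_{ξ−2m}(α) on modular forms. -/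
noncomputable section

open Complex Polynomial

lemma coeff_comp_linear (f : Polynomial ℂ) (m : ℕ) (hf : f.degree ≤ (m : WithBot ℕ))
    (a b : ℂ) : (f.comp (C a * (X - C b))).coeff m = f.coeff m * a ^ m := by
  rw [Polynomial.comp_eq_sum_left, Polynomial.sum_def, Polynomial.finset_sum_coeff]
  have hp : (C a * (X - C b)).degree ≤ 1 := by
    calc (C a * (X - C b)).degree ≤ (C a).degree + (X - C b).degree := degree_mul_le _ _
    _ ≤ 0 + 1 := add_le_add degree_C_le (degree_X_sub_C b).le
    _ = 1 := by norm_num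
  rw [Finset.sum_eq_single m]
  · rw [coeff_C_mul]
    congr 1
    rw [mul_pow, ← C_pow, coeff_C_mul]
    have h1 : ((X - C b) ^ m).natDegree = m := by
      simp [natDegree_pow, natDegree_X_sub_C]
    have h2 := ((monic_X_sub_C b).pow m).coeff_natDegree
    rw [h1] at h2
    rw [h2, mul_one]
  · intro k hk hkm
    rw [coeff_C_mul]
    have hkle : k ≤ m := by
      have := Polynomial.le_degree_of_mem_supp k hk
      exact_mod_cast this.trans hf
    have hklt : k < m := lt_of_le_of_ne hkle hkm
    have hd : ((C a * (X - C b)) ^ k).degree < (m : WithBot ℕ) := by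
      calc ((C a * (X - C b)) ^ k).degree ≤ k • (C a * (X - C b)).degree := degree_pow_le _ _
      _ ≤ k • (1 : WithBot ℕ) := nsmul_le_nsmul_right hp k
      _ = (k : WithBot ℕ) := by simp
      _ < m := by exact_mod_cast hklt
    rw [coeff_eq_zero_of_degree_lt hd, mul_zero]
  · intro hm
    rw [Polynomial.notMem_support_iff.mp hm]
    simp

lemma gdet_pos (α : GL2P) : 0 < gdet α := α.prop

lemma gJ_ne_zero (α : GL2P) (z : ℂ) (hz : 0 < z.im) : gJ α z ≠ 0 := by
  intro h
  have him : (gJ α z).im = gmat α 1 0 * z.im := by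
    simp [gJ, Complex.add_im, Complex.mul_im]
  have hc : gmat α 1 0 = 0 := by
    have := congrArg Complex.im h
    rw [him] at this
    simpa [hz.ne'] using this
  have hd : gmat α 1 1 = 0 := by
    have := congrArg Complex.re h
    simpa [gJ, hc] using this
  have hzero : gdet α = 0 := by
    rw [gdet, Matrix.det_fin_two, hc, hd]; ring
  exact (gdet_pos α).ne' hzero

lemma detpow_sub (α : GL2P) (ξ : ℤ) (m : ℕ) :
    detpow α (ξ - 2 * m) = detpow α ξ * ((gdet α : ℂ))⁻¹ ^ m := by
  unfold detpow
  rw [show ((ξ - 2 * m : ℤ) : ℝ) / 2 = (ξ : ℝ) / 2 + (-(m : ℝ)) by push_cast; ring,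
    Real.rpow_add (gdet_pos α), Real.rpow_neg (gdet_pos α).le, Real.rpow_natCast]
  push_cast
  ring

lemma gJ_zpow_sub (α : GL2P) (z : ℂ) (hz : 0 < z.im) (ξ : ℤ) (m : ℕ) :
    gJ α z ^ (-(ξ - 2 * (m : ℤ))) = gJ α z ^ (-ξ) * (gJ α z ^ 2) ^ m := by
  rw [show -(ξ - 2 * (m : ℤ)) = -ξ + 2 * m by ring, zpow_add₀ (gJ_ne_zero α z hz)]
  congr 1
  rw [show (2 * (m : ℤ)) = ((2 * m : ℕ) : ℤ) by push_cast; ring, zpow_natCast, pow_mul]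

-- STATEMENT 10
theorem stmt10 (Γ : Subgroup SL2R) (hΓ : DiscreteTopology Γ) (ξ : ℤ) (m : ℕ)
    (F : ℂ → Polynomial ℂ) (hF : InFmX m F) :
    (∀ α : GL2P, ∀ z ∈ UHP,
      (polyActG ξ F α z).coeff m =
        detpow α (ξ - 2 * m) * gJ α z ^ (-(ξ - 2 * (m : ℤ))) * (F (gact α z)).coeff m) ∧
    (∀ (α : GL2P) (s : ℕ) (A : Fin s → GL2P),
      (∀ i, ∃ γ₁ ∈ Γ, ∃ γ₂ ∈ Γ, A i = (γ₁ : GL2P) * α * (γ₂ : GL2P)) →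
      (∀ γ₁ ∈ Γ, ∀ γ₂ ∈ Γ,
        ∃ i, ∃ γ ∈ Γ, (γ₁ : GL2P) * α * (γ₂ : GL2P) = (γ : GL2P) * A i) →
      (∀ i j : Fin s, (∃ γ ∈ Γ, A i = (γ : GL2P) * A j) → i = j) →
      ∀ z ∈ UHP,
        (∑ i, polyActG ξ F (A i) z).coeff m =
          ∑ i, detpow (A i) (ξ - 2 * m) * gJ (A i) z ^ (-(ξ - 2 * (m : ℤ))) *
            (F (gact (A i) z)).coeff m) := by
  have key : ∀ α : GL2P, ∀ z ∈ UHP,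
      (polyActG ξ F α z).coeff m =
        detpow α (ξ - 2 * m) * gJ α z ^ (-(ξ - 2 * (m : ℤ))) * (F (gact α z)).coeff m := by
    intro α z hz
    have hz' : 0 < z.im := hz
    simp only [polyActG, coeff_C_mul]
    rw [coeff_comp_linear _ m (hF.1 _) _ _, detpow_sub, gJ_zpow_sub α z hz', mul_pow]
    ring
  refine ⟨key, fun α s A _ _ _ z hz => ?_⟩
  rw [Polynomial.finset_sum_coeff]
  exact Finset.sum_congr rfl fun i _ => key (A i) z hz
end
end
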